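/- Let S be a commutative local ring with involution and V a free S-module with nondegenerate skew hermitian form h admitting a symplectic basis u₁,v₁,…,u_m,v_m. For u ∈ V the following are equivalent: (1) u is a basis vector of V (belongs to some basis); (2) h(u,w) is a unit of S for some w in the given symplectic basis; (3) h(u,v) is a unit for some v ∈ V; (4) h(u,z) = 1 for some z ∈ V. -/

import Mathlib

variable {S V : Type*} [CommRing S] [StarRing S] [AddCommGroup V] [Module S V]

/-- `b` is a symplectic basis for the skew hermitian form `h`. -/
def IsSympBasis {m : ℕ} (h : V →ₛₗ[starRingEnd S] V →ₗ[S] S)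
    (b : Module.Basis (Fin m ⊕ Fin m) S V) : Prop :=
  (∀ i j, h (b (.inl i)) (b (.inr j)) = if i = j then 1 else 0) ∧
  (∀ i j, h (b (.inl i)) (b (.inl j)) = 0) ∧
  (∀ i j, h (b (.inr i)) (b (.inr j)) = 0)

/-- `v` is a basis vector of the free module `V` of rank `2m`. -/
def IsBasisVector (S : Type*) {V : Type*} [CommRing S] [AddCommGroup V] [Module S V]
    (m : ℕ) (v : V) : Prop :=
  ∃ (c : Module.Basis (Fin m ⊕ Fin m) S V) (i : Fin m ⊕ Fin m), c i = v

/-- If a coordinate of `u` with respect to a basis is a unit, then `u` can replace the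
corresponding basis vector to get a new basis. -/
lemma exists_basis_of_isUnit_repr {ι : Type*} [Fintype ι] [DecidableEq ι]
    (b : Module.Basis ι S V) (u : V) (k : ι) (hk : IsUnit (b.repr u k)) :
    ∃ c : Module.Basis ι S V, c k = u := by
  classical
  set M : Matrix ι ι S := Matrix.updateCol (1 : Matrix ι ι S) k (b.repr u) with hM
  have hdet : M.det = b.repr u k := by
    have := Matrix.cramer_one (n := ι) (α := S)
    calc M.det = Matrix.cramer (1 : Matrix ι ι S) (b.repr u) k := by
          rw [Matrix.cramer_apply]
        _ = b.repr u k := by rw [Matrix.cramer_one]; rfl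
  set f : V →ₗ[S] V := Matrix.toLin b b M with hf
  have hMf : LinearMap.toMatrix b b f = M := by
    rw [hf, LinearMap.toMatrix_toLin]
  have hdet' : IsUnit (LinearMap.toMatrix b b f).det := by
    rw [hMf, hdet]; exact hk
  refine ⟨b.map (LinearEquiv.ofIsUnitDet hdet'), ?_⟩
  rw [Module.Basis.map_apply, LinearEquiv.ofIsUnitDet_apply, hf, Matrix.toLin_self]
  have : ∀ j, M j k = b.repr u j := by
    intro j; simp [hM, Matrix.updateCol_apply]
  simp only [this]
  exact b.sum_repr u

/-- characterizations of basis vectors of `V` in terms of the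
nondegenerate skew hermitian form `h`. -/
theorem stmt11 [IsLocalRing S] {m : ℕ}
    (h : V →ₛₗ[starRingEnd S] V →ₗ[S] S)
    (hskew : ∀ x y, star (h x y) = - h y x)
    (hnd : ∀ x, (∀ y, h x y = 0) → x = 0)
    (b : Module.Basis (Fin m ⊕ Fin m) S V) (hb : IsSympBasis h b) (u : V) :
    [IsBasisVector S m u,
     ∃ i : Fin m ⊕ Fin m, IsUnit (h u (b i)),
     ∃ v : V, IsUnit (h u v),
     ∃ z : V, h u z = 1].TFAE := by
  classical
  obtain ⟨h1, h2, h3⟩ := hb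
  -- key formulas
  have huexp : ∀ y : V, h u y = ∑ j, star (b.repr u j) * h (b j) y := by
    intro y
    conv_lhs => rw [← b.sum_repr u]
    rw [map_sum]
    simp only [LinearMap.map_smulₛₗ, LinearMap.sum_apply, LinearMap.smul_apply, smul_eq_mul]
    rfl
  have hinr : ∀ t : Fin m, h u (b (.inr t)) = star (b.repr u (.inl t)) := by
    intro t
    rw [huexp, Fintype.sum_sum_type]
    simp only [h1, h3, mul_ite, mul_one, mul_zero]
    simp [Finset.sum_ite_eq']
  have hinl : ∀ t : Fin m, h u (b (.inl t)) = - star (b.repr u (.inr t)) := by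
    intro t
    have key : ∀ s, h (b (.inr s)) (b (.inl t)) = - (if t = s then 1 else 0) := by
      intro s
      have := hskew (b (.inl t)) (b (.inr s))
      rw [h1] at this
      have : h (b (Sum.inr s)) (b (Sum.inl t)) = - star (if t = s then (1:S) else 0) := by
        rw [← neg_neg (h (b (Sum.inr s)) (b (Sum.inl t))), ← this]
      rw [this]
      congr 1
      split <;> simp
    rw [huexp, Fintype.sum_sum_type]
    simp only [h2, key, mul_zero, mul_neg, mul_ite, mul_one]
    simp [Finset.sum_ite_eq', ← star_neg]
  -- (2) iff some coordinate is a unit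
  have coord_iff : (∃ i : Fin m ⊕ Fin m, IsUnit (h u (b i))) ↔
      ∃ k : Fin m ⊕ Fin m, IsUnit (b.repr u k) := by
    constructor
    · rintro ⟨i, hi⟩
      cases i with
      | inl t => exact ⟨.inr t, by rw [hinl t] at hi; simpa [isUnit_star] using hi.neg⟩
      | inr t => exact ⟨.inl t, by rw [hinr t] at hi; simpa [isUnit_star] using hi⟩
    · rintro ⟨k, hk⟩
      cases k with
      | inl t => exact ⟨.inr t, by rw [hinr t]; simpa [isUnit_star] using hk⟩
      | inr t => exact ⟨.inl t, by rw [hinl t]; exact ((isUnit_star.mpr hk).neg)⟩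
  tfae_have 1 → 2 := by
    rintro ⟨c, i, hci⟩
    rw [coord_iff]
    by_contra hcon
    push_neg at hcon
    have hmem : ∀ k, b.repr u k ∈ IsLocalRing.maximalIdeal S := fun k =>
      (IsLocalRing.mem_maximalIdeal _).mpr (hcon k)
    have : c.repr u i ∈ IsLocalRing.maximalIdeal S := by
      rw [show u = ∑ k, b.repr u k • b k from (b.sum_repr u).symm,
        map_sum, Finsupp.finset_sum_apply]
      refine Ideal.sum_mem _ (fun k _ => ?_)
      rw [map_smul, Finsupp.smul_apply, smul_eq_mul]
      exact Ideal.mul_mem_right _ _ (hmem k)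
    rw [← hci, Module.Basis.repr_self, Finsupp.single_eq_same] at this
    exact ((IsLocalRing.mem_maximalIdeal _).mp this) isUnit_one
  tfae_have 2 → 3 := by
    rintro ⟨i, hi⟩; exact ⟨b i, hi⟩
  tfae_have 3 → 4 := by
    rintro ⟨v, hv⟩
    obtain ⟨s, hs⟩ := hv
    exact ⟨(↑s⁻¹ : S) • v, by rw [map_smul, smul_eq_mul, ← hs, Units.inv_mul]⟩
  tfae_have 4 → 2 := by
    rintro ⟨z, hz⟩
    by_contra hcon
    push_neg at hcon
    have hmem : ∀ k, h u (b k) ∈ IsLocalRing.maximalIdeal S := fun k =>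
      (IsLocalRing.mem_maximalIdeal _).mpr (hcon k)
    have : (1 : S) ∈ IsLocalRing.maximalIdeal S := by
      rw [← hz, show z = ∑ k, b.repr z k • b k from (b.sum_repr z).symm, map_sum]
      refine Ideal.sum_mem _ (fun k _ => ?_)
      rw [map_smul, smul_eq_mul]
      exact Ideal.mul_mem_left _ _ (hmem k)
    exact ((IsLocalRing.mem_maximalIdeal _).mp this) isUnit_one
  tfae_have 2 → 1 := by
    intro h2'
    obtain ⟨k, hk⟩ := coord_iff.mp h2'
    obtain ⟨c, hc⟩ := exists_basis_of_isUnit_repr b u k hk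
    exact ⟨c, k, hc⟩
  tfae_finish
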